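/- The sum of 1/(b²d²(b+d)²) over all pairs of coprime positive integers (b,d) converges and equals 1/3. -/

import Mathlib

open Finset

namespace SternBrocotAux

/-- Stern–Brocot style map: a path in the binary tree to a coprime pair. -/
def f : List Bool → ℕ × ℕ
  | [] => (1, 1)
  | (b :: l) =>
      let p := f l
      if b then (p.1, p.1 + p.2) else (p.1 + p.2, p.2)

lemma f_pos : ∀ l : List Bool, 0 < (f l).1 ∧ 0 < (f l).2 := by
  intro l
  induction l with
  | nil => exact ⟨one_pos, one_pos⟩
  | cons b l ih =>
      cases b <;> simp [f] <;> omega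

lemma f_gcd : ∀ l : List Bool, Nat.gcd (f l).1 (f l).2 = 1 := by
  intro l
  induction l with
  | nil => rfl
  | cons b l ih =>
      cases b <;> simp only [f]
      · simpa [Nat.gcd_self_add_right] using ih
      · simpa [Nat.gcd_add_self_left] using ih

lemma f_sum_ge : ∀ l : List Bool, l.length + 2 ≤ (f l).1 + (f l).2 := by
  intro l
  induction l with
  | nil => simp [f]
  | cons b l ih =>
      have h := f_pos l
      cases b <;> simp [f] at * <;> omega

lemma f_injective : Function.Injective f := by
  intro l
  induction l with
  | nil =>
      intro l' h
      cases l' with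
      | nil => rfl
      | cons b m =>
          exfalso
          have h1 := f_pos m
          cases b <;> simp [f, Prod.ext_iff] at h <;> omega
  | cons b l ih =>
      intro l' h
      cases l' with
      | nil =>
          exfalso
          have h1 := f_pos l
          cases b <;> simp [f] at h <;> omega
      | cons b' m =>
          have h1 := f_pos l
          have h2 := f_pos m
          cases b <;> cases b' <;> simp [f, Prod.ext_iff] at h ⊢
          · exact ih (Prod.ext (by omega) (by omega))
          · omega
          · omega
          · exact ih (Prod.ext (by omega) (by omega))

lemma f_surjective : ∀ x y : ℕ, 0 < x → 0 < y → Nat.gcd x y = 1 →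
    ∃ l : List Bool, f l = (x, y) := by
  have H : ∀ n x y : ℕ, x + y ≤ n → 0 < x → 0 < y → Nat.gcd x y = 1 →
      ∃ l : List Bool, f l = (x, y) := by
    intro n
    induction n with
    | zero => intro x y h hx hy _; omega
    | succ n ih =>
        intro x y h hx hy hg
        rcases lt_trichotomy x y with hlt | heq | hgt
        · obtain ⟨l, hl⟩ := ih x (y - x) (by omega) hx (by omega)
            (by rw [← hg, Nat.gcd_sub_self_right (le_of_lt hlt)])
          exact ⟨true :: l, by simp [f, hl, Prod.ext_iff]; omega⟩
        · have h1 : x = 1 ∧ y = 1 := by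
            subst heq; rw [Nat.gcd_self] at hg; omega
          exact ⟨[], by simp [f, Prod.ext_iff]; omega⟩
        · obtain ⟨l, hl⟩ := ih (x - y) y (by omega) (by omega) hy
            (by rw [← hg, Nat.gcd_comm, Nat.gcd_sub_self_right (le_of_lt hgt), Nat.gcd_comm])
          exact ⟨false :: l, by simp [f, hl, Prod.ext_iff]; omega⟩
  intro x y hx hy hg
  exact H (x + y) x y le_rfl hx hy hg

/-- the term function on pairs -/
noncomputable def t (p : ℕ × ℕ) : ℝ :=
  1 / ((p.1 : ℝ) ^ 2 * (p.2 : ℝ) ^ 2 * ((p.1 : ℝ) + p.2) ^ 2)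

/-- the potential function -/
noncomputable def g (p : ℕ × ℕ) : ℝ := 1 / (3 * (p.1 : ℝ) ^ 3 * (p.2 : ℝ) ^ 3)

lemma t_nonneg (p : ℕ × ℕ) : 0 ≤ t p := by
  unfold t; positivity

lemma g_nonneg (p : ℕ × ℕ) : 0 ≤ g p := by
  unfold g; positivity

/-- Key telescoping identity. -/
lemma key (l : List Bool) :
    t (f l) = g (f l) - g (f (false :: l)) - g (f (true :: l)) := by
  obtain ⟨hx, hy⟩ := f_pos l
  set x := (f l).1
  set y := (f l).2
  have hx' : (0 : ℝ) < (x : ℝ) := by exact_mod_cast hx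
  have hy' : (0 : ℝ) < (y : ℝ) := by exact_mod_cast hy
  simp only [t, g, f]
  push_cast
  have hx'' : ((f l).1 : ℝ) ≠ 0 := ne_of_gt hx'
  have hy'' : ((f l).2 : ℝ) ≠ 0 := ne_of_gt hy'
  have hxy : ((f l).1 : ℝ) + (f l).2 ≠ 0 := by positivity
  field_simp
  ring

/-- the finset of paths of length `n` -/
def level : ℕ → Finset (List Bool)
  | 0 => {[]}
  | (n + 1) => ((level n).image (false :: ·)) ∪ ((level n).image (true :: ·))

lemma mem_level : ∀ n l, l ∈ level n ↔ l.length = n := by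
  intro n
  induction n with
  | zero => intro l; cases l <;> simp [level]
  | succ n ih =>
      intro l
      cases l with
      | nil => simp [level]
      | cons b m =>
          cases b <;> simp [level, ih]

lemma level_sum_g_eq (n : ℕ) :
    ∑ l ∈ level (n + 1), g (f l)
      = ∑ l ∈ level n, (g (f (false :: l)) + g (f (true :: l))) := by
  have hdisj : Disjoint ((level n).image (false :: ·)) ((level n).image (true :: ·)) := by
    simp [Finset.disjoint_left]
  rw [show level (n+1) = ((level n).image (false :: ·)) ∪ ((level n).image (true :: ·)) from rfl,
    Finset.sum_union hdisj, Finset.sum_image (by simp), Finset.sum_image (by simp),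
    ← Finset.sum_add_distrib]

/-- the finset of paths of length `< n` -/
def below : ℕ → Finset (List Bool)
  | 0 => ∅
  | (n + 1) => below n ∪ level n

lemma mem_below : ∀ n l, l ∈ below n ↔ l.length < n := by
  intro n
  induction n with
  | zero => simp [below]
  | succ n ih => intro l; simp [below, ih, mem_level]; omega

lemma below_sum (n : ℕ) :
    ∑ l ∈ below n, t (f l) = 1 / 3 - ∑ l ∈ level n, g (f l) := by
  induction n with
  | zero =>
      simp only [below, level, Finset.sum_empty, Finset.sum_singleton, g, f]
      norm_num
  | succ n ih =>
      have hdisj : Disjoint (below n) (level n) := by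
        simp only [Finset.disjoint_left, mem_below, mem_level]
        omega
      rw [show below (n+1) = below n ∪ level n from rfl, Finset.sum_union hdisj, ih,
        level_sum_g_eq]
      have : ∑ l ∈ level n, t (f l)
          = ∑ l ∈ level n, (g (f l) - (g (f (false :: l)) + g (f (true :: l)))) := by
        apply Finset.sum_congr rfl
        intro l _
        rw [key]; ring
      rw [this, Finset.sum_sub_distrib]
      ring

lemma partial_le (s : Finset (List Bool)) : ∑ l ∈ s, t (f l) ≤ 1 / 3 := by
  classical
  obtain ⟨n, hn⟩ : ∃ n, ∀ l ∈ s, l.length < n := by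
    refine ⟨(s.sup List.length) + 1, fun l hl => ?_⟩
    exact Nat.lt_succ_of_le (Finset.le_sup hl)
  have hsub : s ⊆ below n := by
    intro l hl; rw [mem_below]; exact hn l hl
  calc ∑ l ∈ s, t (f l) ≤ ∑ l ∈ below n, t (f l) :=
        Finset.sum_le_sum_of_subset_of_nonneg hsub (fun l _ _ => t_nonneg _)
    _ = 1 / 3 - ∑ l ∈ level n, g (f l) := below_sum n
    _ ≤ 1 / 3 := by
        have : 0 ≤ ∑ l ∈ level n, g (f l) := Finset.sum_nonneg (fun l _ => g_nonneg _)
        linarith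

set_option maxHeartbeats 2000000 in
lemma g_summable : Summable g := by
  have h1 : Summable (fun n : ℕ => 1 / (n : ℝ) ^ 3) :=
    Real.summable_one_div_nat_pow.mpr (by norm_num)
  have h2 : Summable (fun p : ℕ × ℕ => (1 / (p.1 : ℝ) ^ 3) * (1 / (p.2 : ℝ) ^ 3)) :=
    h1.mul_of_nonneg h1 (fun n => by positivity) (fun n => by positivity)
  have h3 := h2.mul_left (1 / 3 : ℝ)
  apply h3.congr
  intro p
  simp only [g]
  ring

lemma level_sum_small {ε : ℝ} (hε : 0 < ε) : ∃ n, ∑ l ∈ level n, g (f l) < ε := by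
  classical
  obtain ⟨s, hs⟩ := g_summable.vanishing (e := Set.Ioo (-ε) ε)
    (Ioo_mem_nhds (by linarith) hε)
  set N := s.sup (fun p => p.1 + p.2) + 1 with hN
  refine ⟨N, ?_⟩
  have hinj : Set.InjOn f (level N : Set (List Bool)) := f_injective.injOn
  have himg : ∑ p ∈ (level N).image f, g p = ∑ l ∈ level N, g (f l) :=
    Finset.sum_image (fun x _ y _ h => f_injective h)
  rw [← himg]
  have hdisj : Disjoint ((level N).image f) s := by
    simp only [Finset.disjoint_left, Finset.mem_image]
    rintro p ⟨l, hl, rfl⟩ hps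
    have h1 : N + 2 ≤ (f l).1 + (f l).2 := by
      have := f_sum_ge l
      rwa [(mem_level N l).mp hl] at this
    have h2 : (f l).1 + (f l).2 ≤ s.sup (fun p : ℕ × ℕ => p.1 + p.2) :=
      Finset.le_sup (f := fun p : ℕ × ℕ => p.1 + p.2) hps
    omega
  exact (hs _ hdisj).2

theorem hasSum_list : HasSum (fun l : List Bool => t (f l)) (1 / 3) := by
  apply hasSum_of_isLUB_of_nonneg _ (fun l => t_nonneg (f l))
  constructor
  · rintro x ⟨s, rfl⟩
    exact partial_le s
  · intro b hb
    by_contra hlt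
    push_neg at hlt
    obtain ⟨n, hn⟩ := level_sum_small (ε := 1 / 3 - b) (by linarith)
    have h1 : ∑ l ∈ below n, t (f l) ≤ b := hb ⟨below n, rfl⟩
    have h2 := below_sum n
    linarith

end SternBrocotAux

open SternBrocotAux in
theorem sum_coprime_sq :
    HasSum (fun x : {p : ℕ × ℕ // 0 < p.1 ∧ 0 < p.2 ∧ Nat.gcd p.1 p.2 = 1} =>
      1 / ((x.val.1 : ℝ) ^ 2 * (x.val.2 : ℝ) ^ 2 * ((x.val.1 : ℝ) + x.val.2) ^ 2))
      (1 / 3) := by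
  have hbij : Function.Bijective
      (fun l : List Bool => (⟨f l, (f_pos l).1, (f_pos l).2, f_gcd l⟩ :
        {p : ℕ × ℕ // 0 < p.1 ∧ 0 < p.2 ∧ Nat.gcd p.1 p.2 = 1})) := by
    constructor
    · intro l l' h
      exact f_injective (congrArg Subtype.val h)
    · rintro ⟨⟨x, y⟩, hx, hy, hg⟩
      obtain ⟨l, hl⟩ := f_surjective x y hx hy hg
      exact ⟨l, Subtype.ext hl⟩
  refine (Equiv.hasSum_iff (Equiv.ofBijective _ hbij)).mp ?_
  have : (fun x : {p : ℕ × ℕ // 0 < p.1 ∧ 0 < p.2 ∧ Nat.gcd p.1 p.2 = 1} =>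
      1 / ((x.val.1 : ℝ) ^ 2 * (x.val.2 : ℝ) ^ 2 * ((x.val.1 : ℝ) + x.val.2) ^ 2))
      ∘ (Equiv.ofBijective _ hbij) = fun l : List Bool => t (f l) := by
    funext l
    simp [Equiv.ofBijective, t]
  rw [this]
  exact hasSum_list
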